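/- For the curve f₀(t) = Ad_{L(t)}(a·e₀ + b·e₁ - c·e₂) with a, b, c constants and L(t) = [[1,0],[t,1]], the derivative satisfies f₀′(t) = Ad_{L(t)}(c·(e₀+e₁) + (b-a)·e₂); consequently f₀ is a null curve (⟨f₀′, f₀′⟩ = 0 for all t) if and only if a = b. -/

import Mathlib

open Matrix

noncomputable section

def e0 : Matrix (Fin 2) (Fin 2) ℝ := !![0, -1; 1, 0]
def e1 : Matrix (Fin 2) (Fin 2) ℝ := !![0, 1; 1, 0]
def e2 : Matrix (Fin 2) (Fin 2) ℝ := !![-1, 0; 0, 1]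

/-- Minkowski inner product on sl(2,ℝ). -/
def ip (X Y : Matrix (Fin 2) (Fin 2) ℝ) : ℝ := (1 / 2) * (X * Y).trace

/-- The rotation matrix about the null axis `e0 + e1`. -/
def L (t : ℝ) : Matrix (Fin 2) (Fin 2) ℝ := !![1, 0; t, 1]

/-- Entrywise derivative of a matrix-valued curve. -/
def matDeriv (F : ℝ → Matrix (Fin 2) (Fin 2) ℝ) (t : ℝ) : Matrix (Fin 2) (Fin 2) ℝ :=
  Matrix.of fun i j => deriv (fun s => F s i j) t

lemma Linv (s : ℝ) : (L s)⁻¹ = !![1, 0; -s, 1] := by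
  apply Matrix.inv_eq_right_inv
  ext i j
  fin_cases i <;> fin_cases j <;>
    simp [L, Matrix.mul_apply, Fin.sum_univ_two]

theorem stmt_5 (a b c : ℝ)
    (f₀ : ℝ → Matrix (Fin 2) (Fin 2) ℝ)
    (hf₀ : ∀ t, f₀ t = L t * (a • e0 + b • e1 - c • e2) * (L t)⁻¹) :
    (∀ t, matDeriv f₀ t = L t * (c • (e0 + e1) + (b - a) • e2) * (L t)⁻¹) ∧
    ((∀ t, ip (matDeriv f₀ t) (matDeriv f₀ t) = 0) ↔ a = b) := by
  have hf : ∀ s, f₀ s =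
      !![c - s*(b-a), b-a; a+b+2*s*c - s^2*(b-a), s*(b-a)-c] := by
    intro s
    rw [hf₀, Linv]
    ext i j
    fin_cases i <;> fin_cases j <;>
      simp [L, e0, e1, e2, Matrix.mul_apply, Fin.sum_univ_two] <;> ring
  have hD : ∀ t, matDeriv f₀ t =
      !![-(b-a), 0; 2*c - 2*t*(b-a), b-a] := by
    intro t
    ext i j
    fin_cases i <;> fin_cases j
    · show deriv (fun s => f₀ s 0 0) t = -(b-a)
      have h : (fun s => f₀ s 0 0) = fun s => c - s*(b-a) := by
        funext s; rw [hf]; simp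
      rw [h]
      have := (((hasDerivAt_id t).mul_const (b-a)).const_sub c).deriv
      simpa using this
    · show deriv (fun s => f₀ s 0 1) t = 0
      have h : (fun s => f₀ s 0 1) = fun _ => b - a := by
        funext s; rw [hf]; simp
      rw [h, deriv_const]
    · show deriv (fun s => f₀ s 1 0) t = 2*c - 2*t*(b-a)
      have h : (fun s => f₀ s 1 0) = fun s => a+b+2*s*c - s^2*(b-a) := by
        funext s; rw [hf]; simp
      rw [h]
      have h1 : HasDerivAt (fun s : ℝ => a+b+2*s*c) (2*c) t := by
        have := ((hasDerivAt_id t).const_mul 2).mul_const c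
        simpa using this.const_add (a+b)
      have h2 : HasDerivAt (fun s : ℝ => s^2*(b-a)) (2*t*(b-a)) t := by
        have := (hasDerivAt_pow 2 t).mul_const (b-a)
        simpa [mul_comm] using this
      have := (h1.sub h2).deriv
      exact this
    · show deriv (fun s => f₀ s 1 1) t = b - a
      have h : (fun s => f₀ s 1 1) = fun s => s*(b-a) - c := by
        funext s; rw [hf]; simp
      rw [h]
      have := (((hasDerivAt_id t).mul_const (b-a)).sub_const c).deriv
      simpa using this
  have hip : ∀ t, ip (matDeriv f₀ t) (matDeriv f₀ t) = (a-b)^2 := by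
    intro t
    rw [hD]
    simp [ip, Matrix.trace_fin_two, Matrix.mul_apply, Fin.sum_univ_two]
    ring
  constructor
  · intro t
    rw [hD, Linv]
    ext i j
    fin_cases i <;> fin_cases j <;>
      simp [L, e0, e1, e2, Matrix.mul_apply, Fin.sum_univ_two] <;> ring
  · constructor
    · intro h
      have := (hip 0).symm.trans (h 0)
      have : a - b = 0 := by
        have := sq_eq_zero_iff.mp this
        exact this
      linarith
    · intro h t
      rw [hip, h]; ring
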